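/- Let G be a finite simple graph without isolated vertices and let D be a minimum dominating set of G that maximizes the number of edges of the subgraph induced by D among all minimum dominating sets. Then every u ∈ D has at least one private neighbor. -/

import Mathlib

/-- `D` is a dominating set of `G`: every vertex outside `D` has a neighbor in `D`. -/
def Dominates {α : Type*} (G : SimpleGraph α) (D : Finset α) : Prop :=
  ∀ v ∉ D, ∃ u ∈ D, G.Adj u v

/-- The domination number `γ(G)`: the minimum cardinality of a dominating set. -/
noncomputable def gamma {α : Type*} (G : SimpleGraph α) : ℕ :=
  sInf {n : ℕ | ∃ D : Finset α, Dominates G D ∧ D.card = n}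

/-- `v` is a private neighbor of `u` with respect to `D`:
`v ∉ D`, `u ∼ v`, and `N(v) ∩ D = {u}`. -/
def PrivateNbr {α : Type*} (G : SimpleGraph α) (D : Finset α) (u v : α) : Prop :=
  v ∉ D ∧ G.Adj u v ∧ ∀ w ∈ D, G.Adj w v → w = u

/-- `D` is canonical: every member of `D` has at least one private neighbor. -/
def Canonical {α : Type*} (G : SimpleGraph α) (D : Finset α) : Prop :=
  ∀ u ∈ D, ∃ v, PrivateNbr G D u v

/-- The number of edges of the subgraph of `G` induced by `D`. -/
noncomputable def inducedEdges {α : Type*} (G : SimpleGraph α) (D : Finset α) : ℕ :=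
  ((G.induce (↑D : Set α)).edgeSet).ncard

lemma inducedEdges_eq {α : Type*} (G : SimpleGraph α) (S : Finset α) :
    inducedEdges G S = {e ∈ G.edgeSet | ∀ v ∈ e, v ∈ S}.ncard := by
  unfold inducedEdges
  have hinj : Function.Injective (Sym2.map (Subtype.val : (↑S : Set α) → α)) :=
    Sym2.map.injective Subtype.val_injective
  rw [← Set.ncard_image_of_injective _ hinj]
  congr 1
  ext e
  induction e with
  | _ a b =>
    simp only [Set.mem_image, Set.mem_setOf_eq, SimpleGraph.mem_edgeSet]
    constructor
    · rintro ⟨e', he', heq⟩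
      induction e' with
      | _ x y =>
        simp only [Sym2.map_pair_eq] at heq
        have hadj : G.Adj ↑x ↑y := he'
        rcases Sym2.eq_iff.mp heq with ⟨h1, h2⟩ | ⟨h1, h2⟩ <;> subst h1 <;> subst h2
        · refine ⟨hadj, ?_⟩
          intro v hv
          rcases Sym2.mem_iff.mp hv with h | h <;> subst h
          · exact x.2
          · exact y.2
        · refine ⟨hadj.symm, ?_⟩
          intro v hv
          rcases Sym2.mem_iff.mp hv with h | h <;> subst h
          · exact y.2
          · exact x.2
    · rintro ⟨hab, hmem⟩
      refine ⟨s(⟨a, hmem a (Sym2.mem_mk_left a b)⟩, ⟨b, hmem b (Sym2.mem_mk_right a b)⟩), ?_, ?_⟩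
      · exact hab
      · simp [Sym2.map_pair_eq]

/-- A minimum dominating set maximizing the number of induced edges among all minimum
dominating sets is canonical: every member has a private neighbor. -/
theorem canonical_of_max_induced_edges {α : Type*} [Fintype α]
    (G : SimpleGraph α) (hG : ∀ v : α, ∃ w : α, G.Adj v w)
    (D : Finset α) (hdom : Dominates G D) (hmin : D.card = gamma G)
    (hmax : ∀ D' : Finset α, Dominates G D' → D'.card = gamma G →
      inducedEdges G D' ≤ inducedEdges G D) :
    ∀ u ∈ D, ∃ v : α, PrivateNbr G D u v := by
  classical
  intro u hu
  by_contra hno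
  push_neg at hno
  -- every vertex outside D adjacent to u has another dominator in D
  have hother : ∀ v, v ∉ D → G.Adj u v → ∃ w ∈ D, w ≠ u ∧ G.Adj w v := by
    intro v hv hadj
    have := hno v
    unfold PrivateNbr at this
    push_neg at this
    obtain ⟨w, hwD, hwadj, hwne⟩ := this hv hadj
    exact ⟨w, hwD, hwne, hwadj⟩
  by_cases hDu : ∃ x ∈ D, G.Adj x u
  · -- D \ {u} dominates: contradiction with minimality
    have hdom' : Dominates G (D.erase u) := by
      intro v hv
      by_cases hveq : v = u
      · obtain ⟨x, hxD, hxadj⟩ := hDu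
        refine ⟨x, Finset.mem_erase.mpr ⟨hxadj.ne, hxD⟩, ?_⟩
        rw [hveq]; exact hxadj
      · have hvD : v ∉ D := fun h => hv (Finset.mem_erase.mpr ⟨hveq, h⟩)
        obtain ⟨x, hxD, hxadj⟩ := hdom v hvD
        by_cases hxu : x = u
        · subst hxu
          obtain ⟨w, hwD, hwne, hwadj⟩ := hother v hvD hxadj
          exact ⟨w, Finset.mem_erase.mpr ⟨hwne, hwD⟩, hwadj⟩
        · exact ⟨x, Finset.mem_erase.mpr ⟨hxu, hxD⟩, hxadj⟩
    have hle : gamma G ≤ (D.erase u).card := Nat.sInf_le ⟨D.erase u, hdom', rfl⟩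
    have : (D.erase u).card < D.card := Finset.card_erase_lt_of_mem hu
    omega
  · -- u has no neighbor in D
    push_neg at hDu
    obtain ⟨w, hw⟩ := hG u
    have hwD : w ∉ D := fun h => hDu w h hw.symm
    set D' := insert w (D.erase u) with hD'
    have hwE : w ∉ D.erase u := fun h => hwD (Finset.mem_of_mem_erase h)
    have hcard : D'.card = D.card := by
      rw [hD', Finset.card_insert_of_notMem hwE, Finset.card_erase_of_mem hu]
      have : 1 ≤ D.card := Finset.card_pos.mpr ⟨u, hu⟩
      omega
    have huD' : u ∉ D' := by
      rw [hD', Finset.mem_insert]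
      rintro (h | h)
      · exact G.loopless.irrefl u (h ▸ hw)
      · exact (Finset.mem_erase.mp h).1 rfl
    have hdom' : Dominates G D' := by
      intro v hv
      by_cases hveq : v = u
      · subst hveq
        exact ⟨w, Finset.mem_insert_self _ _, hw.symm⟩
      · have hvD : v ∉ D := by
          intro h
          exact hv (Finset.mem_insert_of_mem (Finset.mem_erase.mpr ⟨hveq, h⟩))
        obtain ⟨x, hxD, hxadj⟩ := hdom v hvD
        by_cases hxu : x = u
        · subst hxu
          obtain ⟨y, hyD, hyne, hyadj⟩ := hother v hvD hxadj
          exact ⟨y, Finset.mem_insert_of_mem (Finset.mem_erase.mpr ⟨hyne, hyD⟩), hyadj⟩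
        · exact ⟨x, Finset.mem_insert_of_mem (Finset.mem_erase.mpr ⟨hxu, hxD⟩), hxadj⟩
    -- D' has strictly more induced edges
    obtain ⟨z, hzD, hzne, hzadj⟩ := hother w hwD hw
    have hzD' : z ∈ D' := Finset.mem_insert_of_mem (Finset.mem_erase.mpr ⟨hzne, hzD⟩)
    have hsub : {e ∈ G.edgeSet | ∀ v ∈ e, v ∈ D} ⊂ {e ∈ G.edgeSet | ∀ v ∈ e, v ∈ D'} := by
      constructor
      · rintro e ⟨he, hmem⟩
        refine ⟨he, fun v hv => ?_⟩
        have hvD := hmem v hv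
        have hvne : v ≠ u := by
          rintro rfl
          -- v = u ∈ e; other endpoint is in D adjacent to u
          induction e with
          | _ a b =>
            have hab : G.Adj a b := he
            rcases Sym2.mem_iff.mp hv with h | h
            · exact hDu b (hmem b (Sym2.mem_mk_right a b)) (by rw [h]; exact hab.symm)
            · exact hDu a (hmem a (Sym2.mem_mk_left a b)) (by rw [h]; exact hab)
        exact Finset.mem_insert_of_mem (Finset.mem_erase.mpr ⟨hvne, hvD⟩)
      · intro hcon
        have : s(z, w) ∈ {e ∈ G.edgeSet | ∀ v ∈ e, v ∈ D} := by
          apply hcon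
          refine ⟨hzadj, fun v hv => ?_⟩
          rcases Sym2.mem_iff.mp hv with h | h <;> subst h
          · exact hzD'
          · exact Finset.mem_insert_self _ _
        exact hwD (this.2 w (Sym2.mem_mk_right z w))
    have hlt : inducedEdges G D < inducedEdges G D' := by
      rw [inducedEdges_eq, inducedEdges_eq]
      exact Set.ncard_lt_ncard hsub (Set.toFinite _)
    have := hmax D' hdom' (hcard.trans hmin)
    omega
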